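/- Let L be the Laplacian of a connected bi-directed weighted graph on m vertices (L has nonnegative off-diagonal entries, zero row sums, and is irreducible), and let d = (d_1,…,d_m) be the positive left eigenvector of L for eigenvalue 0 (guaranteed by Perron–Frobenius), D = diag(d). Then for every nonzero u ∈ ℝ^m with dᵀu = 0, one has uᵀ(DL + LᵀD)u < 0. -/
import Mathlib


open Matrix

/-- A matrix is irreducible iff the associated directed graph is strongly connected:
for every nonempty proper subset of indices there is a nonzero entry leaving it. -/
def MatrixIrreducible {m : ℕ} (L : Matrix (Fin m) (Fin m) ℝ) : Prop :=
  ∀ S : Set (Fin m), S.Nonempty → S ≠ Set.univ → ∃ i ∈ S, ∃ j ∉ S, L i j ≠ 0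

theorem connected_laplacian_negative_on_transverse
    (m : ℕ) (L : Matrix (Fin m) (Fin m) ℝ)
    (hoff : ∀ i j, i ≠ j → 0 ≤ L i j)
    (hrow : ∀ i, ∑ j, L i j = 0)
    (hirr : MatrixIrreducible L)
    (d : Fin m → ℝ) (hd : ∀ i, 0 < d i)
    (hleft : Matrix.vecMul d L = 0) :
    ∀ u : Fin m → ℝ, u ≠ 0 → d ⬝ᵥ u = 0 →
      u ⬝ᵥ ((Matrix.diagonal d * L + Lᵀ * Matrix.diagonal d).mulVec u) < 0 := by
  intro u hu hdu
  obtain ⟨i0, hi0⟩ : ∃ i, u i ≠ 0 := by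
    by_contra h; push_neg at h; exact hu (funext h)
  set B : Matrix (Fin m) (Fin m) ℝ := fun i j => d i * L i j + L j i * d j with hB
  -- basic facts about B
  have hBsymm : ∀ i j, B i j = B j i := by
    intro i j; simp only [hB]; ring
  have hBoff : ∀ i j, i ≠ j → 0 ≤ B i j := by
    intro i j hij
    have h1 : 0 ≤ d i * L i j := mul_nonneg (hd i).le (hoff i j hij)
    have h2 : 0 ≤ L j i * d j := mul_nonneg (hoff j i (Ne.symm hij)) (hd j).le
    simpa [hB] using add_nonneg h1 h2
  have hBrow : ∀ i, ∑ j, B i j = 0 := by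
    intro i
    have h1 : ∑ j, d i * L i j = 0 := by rw [← Finset.mul_sum, hrow i, mul_zero]
    have h2 : ∑ j, L j i * d j = 0 := by
      have := congrFun hleft i
      simp only [Matrix.vecMul, dotProduct, Pi.zero_apply] at this
      calc ∑ j, L j i * d j = ∑ j, d j * L j i := by
            exact Finset.sum_congr rfl fun j _ => mul_comm _ _
        _ = 0 := this
    simp only [hB]
    rw [Finset.sum_add_distrib, h1, h2, add_zero]
  have hBcol : ∀ j, ∑ i, B i j = 0 := by
    intro j
    calc ∑ i, B i j = ∑ i, B j i := Finset.sum_congr rfl fun i _ => hBsymm i j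
      _ = 0 := hBrow j
  -- rewrite the quadratic form
  have hexpand : u ⬝ᵥ ((Matrix.diagonal d * L + Lᵀ * Matrix.diagonal d).mulVec u)
      = ∑ i, ∑ j, u i * B i j * u j := by
    simp only [dotProduct, Matrix.mulVec, dotProduct, Matrix.add_apply,
      Matrix.diagonal_mul, Matrix.mul_diagonal, Matrix.transpose_apply, hB,
      Finset.mul_sum]
    apply Finset.sum_congr rfl; intro i _
    apply Finset.sum_congr rfl; intro j _
    ring
  -- key identity
  have hkey : ∑ i, ∑ j, B i j * (u i - u j)^2
      = -2 * ∑ i, ∑ j, u i * B i j * u j := by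
    have expand : ∑ i, ∑ j, B i j * (u i - u j)^2
        = ∑ i, ∑ j, (B i j * (u i)^2 - 2 * (u i * B i j * u j) + B i j * (u j)^2) := by
      apply Finset.sum_congr rfl; intro i _
      apply Finset.sum_congr rfl; intro j _
      ring
    have t1 : ∑ i, ∑ j, B i j * (u i)^2 = 0 := by
      apply Finset.sum_eq_zero; intro i _
      rw [← Finset.sum_mul, hBrow i, zero_mul]
    have t3 : ∑ i, ∑ j, B i j * (u j)^2 = 0 := by
      rw [Finset.sum_comm]
      apply Finset.sum_eq_zero; intro j _
      rw [← Finset.sum_mul, hBcol j, zero_mul]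
    calc ∑ i, ∑ j, B i j * (u i - u j)^2
        = (∑ i, ∑ j, B i j * (u i)^2) - (∑ i, ∑ j, 2 * (u i * B i j * u j))
            + (∑ i, ∑ j, B i j * (u j)^2) := by
          rw [expand]; simp [Finset.sum_add_distrib, Finset.sum_sub_distrib]
      _ = -2 * ∑ i, ∑ j, u i * B i j * u j := by
          rw [t1, t3]
          have h2 : ∑ i, ∑ j, 2 * (u i * B i j * u j)
              = 2 * ∑ i, ∑ j, u i * B i j * u j := by
            rw [Finset.mul_sum]
            exact Finset.sum_congr rfl fun i _ => (Finset.mul_sum _ _ _).symm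
          rw [h2]; ring
  -- the sum of squares is strictly positive
  have hS : ∃ i j, B i j * (u i - u j)^2 > 0 := by
    have hne : Nonempty (Fin m) := ⟨i0⟩
    set S : Set (Fin m) := {j | u j = u i0} with hSdef
    have hSne : S.Nonempty := ⟨i0, rfl⟩
    have hSproper : S ≠ Set.univ := by
      intro hSu
      have hconst : ∀ j, u j = u i0 := fun j => by
        have : j ∈ S := hSu ▸ Set.mem_univ j
        exact this
      have hsum : d ⬝ᵥ u = (∑ i, d i) * u i0 := by
        simp only [dotProduct, Finset.sum_mul]
        exact Finset.sum_congr rfl fun j _ => by rw [hconst j]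
      have hpos : 0 < ∑ i, d i := Finset.sum_pos (fun i _ => hd i) Finset.univ_nonempty
      rw [hdu] at hsum
      have : u i0 = 0 := by
        rcases mul_eq_zero.mp hsum.symm with h | h
        · exact absurd h (ne_of_gt hpos)
        · exact h
      exact hi0 this
    obtain ⟨i, hiS, j, hjS, hLij⟩ := hirr S hSne hSproper
    have huij : u i ≠ u j := by
      intro h
      apply hjS
      show u j = u i0
      rw [← h]; exact hiS
    have hij : i ≠ j := fun h => huij (by rw [h])
    have hLpos : 0 < L i j := lt_of_le_of_ne (hoff i j hij) (Ne.symm hLij)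
    have hBpos : 0 < B i j := by
      have h1 : 0 < d i * L i j := mul_pos (hd i) hLpos
      have h2 : 0 ≤ L j i * d j := mul_nonneg (hoff j i (Ne.symm hij)) (hd j).le
      simpa [hB] using add_pos_of_pos_of_nonneg h1 h2
    have hsq : 0 < (u i - u j)^2 := by
      have hne0 : u i - u j ≠ 0 := sub_ne_zero.mpr huij
      positivity
    exact ⟨i, j, mul_pos hBpos hsq⟩
  have hterm_nonneg : ∀ i j, 0 ≤ B i j * (u i - u j)^2 := by
    intro i j
    rcases eq_or_ne i j with h | h
    · subst h; simp
    · exact mul_nonneg (hBoff i j h) (sq_nonneg _)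
  have hsumpos : 0 < ∑ i, ∑ j, B i j * (u i - u j)^2 := by
    obtain ⟨i, j, hij⟩ := hS
    apply Finset.sum_pos'
    · intro i _; exact Finset.sum_nonneg fun j _ => hterm_nonneg i j
    · refine ⟨i, Finset.mem_univ i, ?_⟩
      apply Finset.sum_pos'
      · intro j _; exact hterm_nonneg i j
      · exact ⟨j, Finset.mem_univ j, hij⟩
  rw [hexpand]
  nlinarith [hkey, hsumpos]
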